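/- arXiv:2003.12983 — 2 statements merged into one kernel-verified Lean document; each statement's English description precedes it below -/
import Mathlib

section
/- Let β > 0, κ ≥ 0 and τ > 0 be real numbers. Let M_Ω ∈ ℝ^{n_Ω×n_Ω} and M_Γ ∈ ℝ^{n_Γ×n_Γ} be diagonal matrices with positive diagonal entries, and let L_Ω ∈ ℝ^{n_Ω×n_Ω} and L_Γ ∈ ℝ^{n_Γ×n_Γ} be symmetric positive semidefinite. Let F₁, F₂, G₁, G₂ : ℝ → ℝ be differentiable with F₁, G₁ convex and F₂, G₂ concave, and set F = F₁ + F₂, G = G₁ + G₂. Suppose U, U⁻, μ ∈ ℝ^{n_Ω} and θ ∈ ℝ^{n_Γ} satisfy: (a) β·θ = μ|_Γ; (b) M_Ω(U − U⁻) + β⁻¹·ext(M_Γ(U|_Γ − U⁻|_Γ)) + τ·L_Ω·μ + τ·β⁻¹·ext(L_Γ·θ) = 0; (c) M_Ω·μ + ext(M_Γ·θ) = L_Ω·U + κ·ext(L_Γ·(U|_Γ)) + M_Ω·(F₁′(U) + F₂′(U⁻)) + ext(M_Γ·(G₁′(U|_Γ) + G₂′(U⁻|_Γ))), where the derivatives are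 applied entrywise. Then (1/2)·UᵀL_Ω U + (1/2)·(U − U⁻)ᵀL_Ω(U − U⁻) + (κ/2)·(U|_Γ)ᵀL_Γ(U|_Γ) + (κ/2)·(U|_Γ − U⁻|_Γ)ᵀL_Γ(U|_Γ − U⁻|_Γ) + 𝟙ᵀM_Ω·F(U) + 𝟙ᵀM_Γ·G(U|_Γ) + τ·μᵀL_Ω μ + τ·θᵀL_Γ θ ≤ (1/2)·(U⁻)ᵀL_Ω U⁻ + (κ/2)·(U⁻|_Γ)ᵀL_Γ(U⁻|_Γ) + 𝟙ᵀM_Ω·F(U⁻) + 𝟙ᵀM_Γ·G(U⁻|_Γ). -/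
open Matrix

/-- Restriction of a bulk vector (indexed by `Fin nΓ ⊕ Fin nI`, boundary
coordinates first) to its boundary coordinates. -/
def restrΓ {nΓ nI : ℕ} (v : Fin nΓ ⊕ Fin nI → ℝ) : Fin nΓ → ℝ := fun i => v (Sum.inl i)

/-- Extension of a boundary vector by zero in the interior coordinates. -/
def extΩ {nΓ nI : ℕ} (x : Fin nΓ → ℝ) : Fin nΓ ⊕ Fin nI → ℝ := Sum.elim x 0


lemma dot_extΩ {nΓ nI : ℕ} (v : Fin nΓ ⊕ Fin nI → ℝ) (x : Fin nΓ → ℝ) :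
    v ⬝ᵥ extΩ x = restrΓ v ⬝ᵥ x := by
  simp [dotProduct, extΩ, restrΓ, Fintype.sum_sum_type]

lemma dot_symm {n : Type*} [Fintype n] {M : Matrix n n ℝ} (hM : Mᵀ = M)
    (a b : n → ℝ) : a ⬝ᵥ M.mulVec b = b ⬝ᵥ M.mulVec a := by
  rw [dotProduct_mulVec, ← mulVec_transpose, hM, dotProduct_comm]

lemma dot_polar {n : Type*} [Fintype n] {M : Matrix n n ℝ} (hM : Mᵀ = M)
    (a b : n → ℝ) : (a - b) ⬝ᵥ M.mulVec a
      = (1/2) * (a ⬝ᵥ M.mulVec a) - (1/2) * (b ⬝ᵥ M.mulVec b)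
        + (1/2) * ((a - b) ⬝ᵥ M.mulVec (a - b)) := by
  have h := dot_symm hM a b
  simp only [sub_dotProduct, mulVec_sub, dotProduct_sub] at *
  linarith

lemma tangent_le {F : ℝ → ℝ} (hc : ConvexOn ℝ Set.univ F) (hd : Differentiable ℝ F)
    (x y : ℝ) : F x + deriv F x * (y - x) ≤ F y := by
  rcases lt_trichotomy x y with h | h | h
  · have := hc.deriv_le_slope (Set.mem_univ x) (Set.mem_univ y) h (hd x)
    rw [slope_def_field] at this
    have hxy : 0 < y - x := by linarith
    nlinarith [mul_le_mul_of_nonneg_right this hxy.le, div_mul_cancel₀ (F y - F x) hxy.ne']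
  · simp [h]
  · have := hc.slope_le_deriv (Set.mem_univ y) (Set.mem_univ x) h (hd x)
    rw [slope_def_field] at this
    have hxy : 0 < x - y := by linarith
    nlinarith [mul_le_mul_of_nonneg_right this hxy.le, div_mul_cancel₀ (F x - F y) hxy.ne']

lemma tangent_ge {F : ℝ → ℝ} (hc : ConcaveOn ℝ Set.univ F) (hd : Differentiable ℝ F)
    (x y : ℝ) : F y ≤ F x + deriv F x * (y - x) := by
  have h := tangent_le hc.neg hd.neg x y
  have hdn : deriv (-F) x = -deriv F x := deriv.neg
  simp only [Pi.neg_apply, hdn] at h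
  linarith

/-- Lemma 5.4 of the paper, case `L = 0`, the GMS limit:
under the constraint `β·θ = μ|_Γ` and the combined discrete equation, the
discrete energy inequality holds without the reaction dissipation term. -/
theorem discrete_energy_inequality_GMS (nΓ nI : ℕ) (hnΓ : 1 ≤ nΓ)
    (β κ τ : ℝ) (hβ : 0 < β) (hκ : 0 ≤ κ) (hτ : 0 < τ)
    (MΩ : Matrix (Fin nΓ ⊕ Fin nI) (Fin nΓ ⊕ Fin nI) ℝ)
    (dΩ : Fin nΓ ⊕ Fin nI → ℝ) (hdΩ : ∀ i, 0 < dΩ i) (hMΩ : MΩ = Matrix.diagonal dΩ)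
    (MΓ : Matrix (Fin nΓ) (Fin nΓ) ℝ)
    (dΓ : Fin nΓ → ℝ) (hdΓ : ∀ i, 0 < dΓ i) (hMΓ : MΓ = Matrix.diagonal dΓ)
    (LΩ : Matrix (Fin nΓ ⊕ Fin nI) (Fin nΓ ⊕ Fin nI) ℝ) (hLΩ : LΩ.PosSemidef)
    (LΓ : Matrix (Fin nΓ) (Fin nΓ) ℝ) (hLΓ : LΓ.PosSemidef)
    (F₁ F₂ G₁ G₂ : ℝ → ℝ)
    (hF₁d : Differentiable ℝ F₁) (hF₂d : Differentiable ℝ F₂)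
    (hG₁d : Differentiable ℝ G₁) (hG₂d : Differentiable ℝ G₂)
    (hF₁c : ConvexOn ℝ Set.univ F₁) (hG₁c : ConvexOn ℝ Set.univ G₁)
    (hF₂c : ConcaveOn ℝ Set.univ F₂) (hG₂c : ConcaveOn ℝ Set.univ G₂)
    (U U' μ : Fin nΓ ⊕ Fin nI → ℝ) (θ : Fin nΓ → ℝ)
    -- (a) chemical equilibrium on the boundary
    (heq : β • θ = restrΓ μ)
    -- (b) combined discrete evolution equation
    (hcombined : MΩ.mulVec (U - U') + β⁻¹ • extΩ (MΓ.mulVec (restrΓ U - restrΓ U'))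
        + τ • LΩ.mulVec μ + (τ * β⁻¹) • extΩ (LΓ.mulVec θ) = 0)
    -- (c) the discrete chemical potential equation
    (hpot : MΩ.mulVec μ + extΩ (MΓ.mulVec θ)
        = LΩ.mulVec U + κ • extΩ (LΓ.mulVec (restrΓ U))
          + MΩ.mulVec (fun i => deriv F₁ (U i) + deriv F₂ (U' i))
          + extΩ (MΓ.mulVec (fun i => deriv G₁ (restrΓ U i) + deriv G₂ (restrΓ U' i)))) :
    (1 / 2) * (U ⬝ᵥ LΩ.mulVec U)
      + (1 / 2) * ((U - U') ⬝ᵥ LΩ.mulVec (U - U'))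
      + (κ / 2) * (restrΓ U ⬝ᵥ LΓ.mulVec (restrΓ U))
      + (κ / 2) * ((restrΓ U - restrΓ U') ⬝ᵥ LΓ.mulVec (restrΓ U - restrΓ U'))
      + (fun _ => (1 : ℝ)) ⬝ᵥ MΩ.mulVec (fun i => F₁ (U i) + F₂ (U i))
      + (fun _ => (1 : ℝ)) ⬝ᵥ MΓ.mulVec (fun i => G₁ (restrΓ U i) + G₂ (restrΓ U i))
      + τ * (μ ⬝ᵥ LΩ.mulVec μ) + τ * (θ ⬝ᵥ LΓ.mulVec θ)
    ≤ (1 / 2) * (U' ⬝ᵥ LΩ.mulVec U')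
      + (κ / 2) * (restrΓ U' ⬝ᵥ LΓ.mulVec (restrΓ U'))
      + (fun _ => (1 : ℝ)) ⬝ᵥ MΩ.mulVec (fun i => F₁ (U' i) + F₂ (U' i))
      + (fun _ => (1 : ℝ)) ⬝ᵥ MΓ.mulVec (fun i => G₁ (restrΓ U' i) + G₂ (restrΓ U' i)) := by
  have hLΩs : LΩᵀ = LΩ := by
    have := hLΩ.1
    simpa [Matrix.IsHermitian, Matrix.conjTranspose_eq_transpose_of_trivial] using this
  have hLΓs : LΓᵀ = LΓ := by
    have := hLΓ.1
    simpa [Matrix.IsHermitian, Matrix.conjTranspose_eq_transpose_of_trivial] using this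
  have hMΩs : MΩᵀ = MΩ := by rw [hMΩ, diagonal_transpose]
  have hMΓs : MΓᵀ = MΓ := by rw [hMΓ, diagonal_transpose]
  set V : Fin nΓ ⊕ Fin nI → ℝ := U - U' with hV
  set W : Fin nΓ → ℝ := restrΓ U - restrΓ U' with hW
  set f : Fin nΓ ⊕ Fin nI → ℝ := fun i => deriv F₁ (U i) + deriv F₂ (U' i) with hf
  set g : Fin nΓ → ℝ := fun i => deriv G₁ (restrΓ U i) + deriv G₂ (restrΓ U' i) with hg
  -- E1 : test the combined equation with μ
  have E1 : μ ⬝ᵥ MΩ.mulVec V + θ ⬝ᵥ MΓ.mulVec W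
      + τ * (μ ⬝ᵥ LΩ.mulVec μ) + τ * (θ ⬝ᵥ LΓ.mulVec θ) = 0 := by
    have h := congrArg (fun w => μ ⬝ᵥ w) hcombined
    simp only [dotProduct_add, dotProduct_smul, smul_eq_mul, dot_extΩ, dotProduct_zero] at h
    rw [show restrΓ μ ⬝ᵥ MΓ.mulVec W = β * (θ ⬝ᵥ MΓ.mulVec W) by
        rw [← heq]; simp [smul_dotProduct],
      show restrΓ μ ⬝ᵥ LΓ.mulVec θ = β * (θ ⬝ᵥ LΓ.mulVec θ) by
        rw [← heq]; simp [smul_dotProduct]] at h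
    have hβ' : β ≠ 0 := hβ.ne'
    field_simp at h
    nlinarith [h]
  -- E2 : test the potential equation with V
  have E2 : μ ⬝ᵥ MΩ.mulVec V + θ ⬝ᵥ MΓ.mulVec W
      = V ⬝ᵥ LΩ.mulVec U + κ * (W ⬝ᵥ LΓ.mulVec (restrΓ U))
        + V ⬝ᵥ MΩ.mulVec f + W ⬝ᵥ MΓ.mulVec g := by
    have h := congrArg (fun w => V ⬝ᵥ w) hpot
    simp only [dotProduct_add, dotProduct_smul, smul_eq_mul, dot_extΩ] at h
    have hrV : restrΓ V = W := rfl
    rw [hrV, dot_symm hMΩs V μ, dot_symm hMΓs W θ] at h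
    exact h
  have E3 := dot_polar hLΩs U U'
  have E4 := dot_polar hLΓs (restrΓ U) (restrΓ U')
  -- convexity estimates
  have I5 : (fun _ => (1 : ℝ)) ⬝ᵥ MΩ.mulVec (fun i => F₁ (U i) + F₂ (U i))
      - (fun _ => (1 : ℝ)) ⬝ᵥ MΩ.mulVec (fun i => F₁ (U' i) + F₂ (U' i))
      ≤ V ⬝ᵥ MΩ.mulVec f := by
    subst hMΩ
    simp only [dotProduct, mulVec_diagonal, one_mul]
    rw [← Finset.sum_sub_distrib]
    apply Finset.sum_le_sum
    intro i _
    have h1 := tangent_le hF₁c hF₁d (U i) (U' i)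
    have h2 := tangent_ge hF₂c hF₂d (U' i) (U i)
    have hd := (hdΩ i).le
    rw [show V i = U i - U' i from rfl, show f i = deriv F₁ (U i) + deriv F₂ (U' i) from rfl]
    have key : F₁ (U i) + F₂ (U i) - (F₁ (U' i) + F₂ (U' i))
        ≤ (deriv F₁ (U i) + deriv F₂ (U' i)) * (U i - U' i) := by linarith
    nlinarith [mul_le_mul_of_nonneg_left key hd]
  have I6 : (fun _ => (1 : ℝ)) ⬝ᵥ MΓ.mulVec (fun i => G₁ (restrΓ U i) + G₂ (restrΓ U i))
      - (fun _ => (1 : ℝ)) ⬝ᵥ MΓ.mulVec (fun i => G₁ (restrΓ U' i) + G₂ (restrΓ U' i))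
      ≤ W ⬝ᵥ MΓ.mulVec g := by
    subst hMΓ
    simp only [dotProduct, mulVec_diagonal, one_mul]
    rw [← Finset.sum_sub_distrib]
    apply Finset.sum_le_sum
    intro i _
    have h1 := tangent_le hG₁c hG₁d (restrΓ U i) (restrΓ U' i)
    have h2 := tangent_ge hG₂c hG₂d (restrΓ U' i) (restrΓ U i)
    have hd := (hdΓ i).le
    rw [show W i = restrΓ U i - restrΓ U' i from rfl,
      show g i = deriv G₁ (restrΓ U i) + deriv G₂ (restrΓ U' i) from rfl]
    have key : G₁ (restrΓ U i) + G₂ (restrΓ U i) - (G₁ (restrΓ U' i) + G₂ (restrΓ U' i))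
        ≤ (deriv G₁ (restrΓ U i) + deriv G₂ (restrΓ U' i)) * (restrΓ U i - restrΓ U' i) := by
      linarith
    nlinarith [mul_le_mul_of_nonneg_left key hd]
  nlinarith [E1, E2, E3, E4, I5, I6, mul_le_mul_of_nonneg_left (le_of_eq E4) hκ]
end

section
/- Let β > 0, κ ≥ 0, τ > 0, L > 0 and let N ≥ 1 be an integer. Let M_Ω ∈ ℝ^{n_Ω×n_Ω} and M_Γ ∈ ℝ^{n_Γ×n_Γ} be diagonal matrices with positive diagonal entries, and let L_Ω ∈ ℝ^{n_Ω×n_Ω} and L_Γ ∈ ℝ^{n_Γ×n_Γ} be symmetric positive semidefinite. Let F₁, F₂, G₁, G₂ : ℝ → ℝ be differentiable with F₁, G₁ convex and F₂, G₂ concave, and set F = F₁ + F₂ and G = G₁ + G₂, with F ≥ 0 and G ≥ 0. Suppose U⁰, …, U^N, μ¹, …, μ^N ∈ ℝ^{n_Ω} and θ¹, …, θ^N ∈ ℝ^{n_Γ} satisfy, for each n ∈ {1, …, N}: (i) M_Ω(Uⁿ − Uⁿ⁻¹) + τ·L_Ω·μⁿ − τ·L⁻¹·ext(M_Γ·(βθⁿ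 − μⁿ|_Γ)) = 0; (ii) M_Γ(Uⁿ|_Γ − Uⁿ⁻¹|_Γ) + τ·L_Γ·θⁿ + τ·β·L⁻¹·M_Γ·(βθⁿ − μⁿ|_Γ) = 0; (iii) M_Ω·μⁿ + ext(M_Γ·θⁿ) = L_Ω·Uⁿ + κ·ext(L_Γ·(Uⁿ|_Γ)) + M_Ω·(F₁′(Uⁿ) + F₂′(Uⁿ⁻¹)) + ext(M_Γ·(G₁′(Uⁿ|_Γ) + G₂′(Uⁿ⁻¹|_Γ))), with entrywise application of derivatives. Set E(U) := (1/2)·UᵀL_Ω U + (κ/2)·(U|_Γ)ᵀL_Γ(U|_Γ) + 𝟙ᵀM_Ω·F(U) + 𝟙ᵀM_Γ·G(U|_Γ). Then for every k ∈ {1, …, N}: E(U^k) + Σ_{n=1}^{k}[τ·(μⁿ)ᵀL_Ω μⁿ + τ·(θⁿ)ᵀL_Γ θⁿ + τ·L⁻¹·(βθⁿ − μⁿ|_Γ)ᵀM_Γ(βθⁿ − μⁿ|_Γ)] ≤ E(U⁰); in particular max_{k ≤ N} E(U^k) ≤ E(U⁰) and τ·Σ_{n=1}^{N}(βθⁿ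 − μⁿ|_Γ)ᵀM_Γ(βθⁿ − μⁿ|_Γ) ≤ L·E(U⁰). -/
open Matrix

/-- The discrete total free energy
`E(U) = (1/2)·UᵀL_Ω U + (κ/2)·(U|_Γ)ᵀL_Γ(U|_Γ) + 𝟙ᵀM_Ω·F(U) + 𝟙ᵀM_Γ·G(U|_Γ)`. -/
noncomputable def discreteEnergy {nΓ nI : ℕ} (κ : ℝ)
    (MΩ LΩ : Matrix (Fin nΓ ⊕ Fin nI) (Fin nΓ ⊕ Fin nI) ℝ)
    (MΓ LΓ : Matrix (Fin nΓ) (Fin nΓ) ℝ)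
    (F G : ℝ → ℝ) (U : Fin nΓ ⊕ Fin nI → ℝ) : ℝ :=
  (1 / 2) * (U ⬝ᵥ LΩ.mulVec U) + (κ / 2) * (restrΓ U ⬝ᵥ LΓ.mulVec (restrΓ U))
    + (fun _ => (1 : ℝ)) ⬝ᵥ MΩ.mulVec (fun i => F (U i))
    + (fun _ => (1 : ℝ)) ⬝ᵥ MΓ.mulVec (fun i => G (restrΓ U i))



section helpers
variable {m : Type*} [Fintype m]

lemma dot_mulVec_symm' {A : Matrix m m ℝ} (hA : Aᵀ = A) (x y : m → ℝ) :
    x ⬝ᵥ A.mulVec y = y ⬝ᵥ A.mulVec x := by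
  rw [Matrix.dotProduct_mulVec, ← Matrix.mulVec_transpose, hA, dotProduct_comm]

lemma transpose_of_posSemidef' {A : Matrix m m ℝ} (hA : A.PosSemidef) : Aᵀ = A := by
  have := hA.1
  simpa [Matrix.IsHermitian, Matrix.conjTranspose_eq_transpose_of_trivial] using this

lemma psd_quad_nonneg' {A : Matrix m m ℝ} (hA : A.PosSemidef) (x : m → ℝ) :
    0 ≤ x ⬝ᵥ A.mulVec x := by simpa using hA.dotProduct_mulVec_nonneg x

lemma quad_step' {A : Matrix m m ℝ} (hA : A.PosSemidef) (a b : m → ℝ) :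
    (1/2) * (a ⬝ᵥ A.mulVec a) - (1/2) * (b ⬝ᵥ A.mulVec b) ≤ (a - b) ⬝ᵥ A.mulVec a := by
  have h0 := psd_quad_nonneg' hA (a - b)
  have hs := dot_mulVec_symm' (transpose_of_posSemidef' hA) a b
  have e1 : (a - b) ⬝ᵥ A.mulVec (a - b)
      = a ⬝ᵥ A.mulVec a - a ⬝ᵥ A.mulVec b - b ⬝ᵥ A.mulVec a + b ⬝ᵥ A.mulVec b := by
    simp [Matrix.mulVec_sub, sub_dotProduct, dotProduct_sub]
    ring
  have e2 : (a - b) ⬝ᵥ A.mulVec a = a ⬝ᵥ A.mulVec a - b ⬝ᵥ A.mulVec a := by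
    simp [sub_dotProduct]
  linarith [h0, e1 ▸ h0]

lemma convex_deriv_ineq' {f : ℝ → ℝ} (hc : ConvexOn ℝ Set.univ f) (hd : Differentiable ℝ f)
    (a b : ℝ) : f a - f b ≤ deriv f a * (a - b) := by
  rcases lt_trichotomy a b with h | rfl | h
  · have h1 := hc.deriv_le_slope (Set.mem_univ a) (Set.mem_univ b) h (hd a)
    rw [slope_def_field] at h1
    have hba : (0:ℝ) < b - a := by linarith
    rw [le_div_iff₀ hba] at h1
    nlinarith
  · simp
  · have h1 := hc.slope_le_deriv (Set.mem_univ b) (Set.mem_univ a) h (hd a)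
    rw [slope_def_field] at h1
    have hba : (0:ℝ) < a - b := by linarith
    rw [div_le_iff₀ hba] at h1
    nlinarith

lemma concave_deriv_ineq' {f : ℝ → ℝ} (hc : ConcaveOn ℝ Set.univ f) (hd : Differentiable ℝ f)
    (a b : ℝ) : f a - f b ≤ deriv f b * (a - b) := by
  have h := convex_deriv_ineq' hc.neg hd.neg b a
  have hder : deriv (-f) b = -deriv f b := by
    change deriv (fun x => -f x) b = _; exact deriv.neg
  simp only [Pi.neg_apply, hder] at h
  nlinarith

end helpers

section exth
variable {nΓ nI : ℕ}

lemma extΩ_dot (x : Fin nΓ → ℝ) (v : Fin nΓ ⊕ Fin nI → ℝ) :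
    extΩ x ⬝ᵥ v = x ⬝ᵥ restrΓ v := by
  simp [dotProduct, extΩ, restrΓ, Fintype.sum_sum_type]

lemma restrΓ_sub (a b : Fin nΓ ⊕ Fin nI → ℝ) : restrΓ (a - b) = restrΓ a - restrΓ b := rfl

end exth

/-- Lemma 5.5 of the paper, matrix formulation: the global
discrete energy–dissipation estimate obtained by summing the per-step energy
inequality, including the `L`-dependent bound on the chemical potential
difference `βθ − μ|_Γ`. -/
theorem discrete_energy_global (nΓ nI : ℕ) (hnΓ : 1 ≤ nΓ) (N : ℕ) (hN : 1 ≤ N)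
    (β κ τ L : ℝ) (hβ : 0 < β) (hκ : 0 ≤ κ) (hτ : 0 < τ) (hL : 0 < L)
    (MΩ : Matrix (Fin nΓ ⊕ Fin nI) (Fin nΓ ⊕ Fin nI) ℝ)
    (dΩ : Fin nΓ ⊕ Fin nI → ℝ) (hdΩ : ∀ i, 0 < dΩ i) (hMΩ : MΩ = Matrix.diagonal dΩ)
    (MΓ : Matrix (Fin nΓ) (Fin nΓ) ℝ)
    (dΓ : Fin nΓ → ℝ) (hdΓ : ∀ i, 0 < dΓ i) (hMΓ : MΓ = Matrix.diagonal dΓ)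
    (LΩ : Matrix (Fin nΓ ⊕ Fin nI) (Fin nΓ ⊕ Fin nI) ℝ) (hLΩ : LΩ.PosSemidef)
    (LΓ : Matrix (Fin nΓ) (Fin nΓ) ℝ) (hLΓ : LΓ.PosSemidef)
    (F₁ F₂ G₁ G₂ : ℝ → ℝ)
    (hF₁d : Differentiable ℝ F₁) (hF₂d : Differentiable ℝ F₂)
    (hG₁d : Differentiable ℝ G₁) (hG₂d : Differentiable ℝ G₂)
    (hF₁c : ConvexOn ℝ Set.univ F₁) (hG₁c : ConvexOn ℝ Set.univ G₁)
    (hF₂c : ConcaveOn ℝ Set.univ F₂) (hG₂c : ConcaveOn ℝ Set.univ G₂)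
    (hFpos : ∀ s : ℝ, 0 ≤ F₁ s + F₂ s) (hGpos : ∀ s : ℝ, 0 ≤ G₁ s + G₂ s)
    (U μ : ℕ → (Fin nΓ ⊕ Fin nI → ℝ)) (θ : ℕ → (Fin nΓ → ℝ))
    -- (i) bulk evolution equation, for n = 1, …, N
    (hbulk : ∀ n, 1 ≤ n → n ≤ N →
      MΩ.mulVec (U n - U (n - 1)) + τ • LΩ.mulVec (μ n)
        - (τ * L⁻¹) • extΩ (MΓ.mulVec (β • θ n - restrΓ (μ n))) = 0)
    -- (ii) boundary evolution equation, for n = 1, …, N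
    (hbdry : ∀ n, 1 ≤ n → n ≤ N →
      MΓ.mulVec (restrΓ (U n) - restrΓ (U (n - 1))) + τ • LΓ.mulVec (θ n)
        + (τ * β * L⁻¹) • MΓ.mulVec (β • θ n - restrΓ (μ n)) = 0)
    -- (iii) discrete chemical potential equation, for n = 1, …, N
    (hpot : ∀ n, 1 ≤ n → n ≤ N →
      MΩ.mulVec (μ n) + extΩ (MΓ.mulVec (θ n))
        = LΩ.mulVec (U n) + κ • extΩ (LΓ.mulVec (restrΓ (U n)))
          + MΩ.mulVec (fun i => deriv F₁ (U n i) + deriv F₂ (U (n - 1) i))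
          + extΩ (MΓ.mulVec (fun i =>
              deriv G₁ (restrΓ (U n) i) + deriv G₂ (restrΓ (U (n - 1)) i)))) :
    (∀ k, 1 ≤ k → k ≤ N →
      discreteEnergy κ MΩ LΩ MΓ LΓ (fun s => F₁ s + F₂ s) (fun s => G₁ s + G₂ s) (U k)
        + ∑ n ∈ Finset.Icc 1 k,
            (τ * (μ n ⬝ᵥ LΩ.mulVec (μ n)) + τ * (θ n ⬝ᵥ LΓ.mulVec (θ n))
              + τ * L⁻¹ * ((β • θ n - restrΓ (μ n)) ⬝ᵥ MΓ.mulVec (β • θ n - restrΓ (μ n))))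
      ≤ discreteEnergy κ MΩ LΩ MΓ LΓ (fun s => F₁ s + F₂ s) (fun s => G₁ s + G₂ s) (U 0)) ∧
    (∀ k, k ≤ N →
      discreteEnergy κ MΩ LΩ MΓ LΓ (fun s => F₁ s + F₂ s) (fun s => G₁ s + G₂ s) (U k)
        ≤ discreteEnergy κ MΩ LΩ MΓ LΓ (fun s => F₁ s + F₂ s) (fun s => G₁ s + G₂ s) (U 0)) ∧
    τ * ∑ n ∈ Finset.Icc 1 N,
        (β • θ n - restrΓ (μ n)) ⬝ᵥ MΓ.mulVec (β • θ n - restrΓ (μ n))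
      ≤ L * discreteEnergy κ MΩ LΩ MΓ LΓ (fun s => F₁ s + F₂ s) (fun s => G₁ s + G₂ s) (U 0) := by
  subst hMΩ hMΓ
  set E : (Fin nΓ ⊕ Fin nI → ℝ) → ℝ :=
    discreteEnergy κ (Matrix.diagonal dΩ) LΩ (Matrix.diagonal dΓ) LΓ
      (fun s => F₁ s + F₂ s) (fun s => G₁ s + G₂ s) with hE
  have hdΩsym : (Matrix.diagonal dΩ)ᵀ = Matrix.diagonal dΩ := Matrix.diagonal_transpose dΩ
  have hdΓsym : (Matrix.diagonal dΓ)ᵀ = Matrix.diagonal dΓ := Matrix.diagonal_transpose dΓ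
  have hLΩsym : LΩᵀ = LΩ := transpose_of_posSemidef' hLΩ
  have hLΓsym : LΓᵀ = LΓ := transpose_of_posSemidef' hLΓ
  -- nonnegativity of the diagonal quadratic form on the boundary
  have hdiagΓ : ∀ x : Fin nΓ → ℝ, 0 ≤ x ⬝ᵥ (Matrix.diagonal dΓ).mulVec x := by
    intro x
    simp only [dotProduct, Matrix.mulVec_diagonal]
    refine Finset.sum_nonneg fun i _ => ?_
    nlinarith [(hdΓ i).le, sq_nonneg (x i)]
  -- nonnegativity of the energy
  have hEnonneg : ∀ v, 0 ≤ E v := by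
    intro v
    have h1 : (0:ℝ) ≤ (1 / 2) * (v ⬝ᵥ LΩ.mulVec v) := by
      have := psd_quad_nonneg' hLΩ v; linarith
    have h2 : (0:ℝ) ≤ (κ / 2) * (restrΓ v ⬝ᵥ LΓ.mulVec (restrΓ v)) := by
      have := psd_quad_nonneg' hLΓ (restrΓ v)
      have hk2 : (0:ℝ) ≤ κ / 2 := by linarith
      exact mul_nonneg hk2 this
    have h3 : (0:ℝ) ≤ (fun _ => (1:ℝ)) ⬝ᵥ (Matrix.diagonal dΩ).mulVec (fun i => F₁ (v i) + F₂ (v i)) := by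
      simp only [dotProduct, Matrix.mulVec_diagonal, one_mul]
      exact Finset.sum_nonneg fun i _ => mul_nonneg (hdΩ i).le (hFpos (v i))
    have h4 : (0:ℝ) ≤ (fun _ => (1:ℝ)) ⬝ᵥ (Matrix.diagonal dΓ).mulVec (fun i => G₁ (restrΓ v i) + G₂ (restrΓ v i)) := by
      simp only [dotProduct, Matrix.mulVec_diagonal, one_mul]
      exact Finset.sum_nonneg fun i _ => mul_nonneg (hdΓ i).le (hGpos (restrΓ v i))
    rw [hE]
    unfold discreteEnergy
    linarith
  -- per-step dissipation
  set D : ℕ → ℝ := fun n =>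
      τ * (μ n ⬝ᵥ LΩ.mulVec (μ n)) + τ * (θ n ⬝ᵥ LΓ.mulVec (θ n))
        + τ * L⁻¹ * ((β • θ n - restrΓ (μ n)) ⬝ᵥ (Matrix.diagonal dΓ).mulVec (β • θ n - restrΓ (μ n)))
    with hD
  have hDnonneg : ∀ n, 0 ≤ D n := by
    intro n
    have h1 := psd_quad_nonneg' hLΩ (μ n)
    have h2 := psd_quad_nonneg' hLΓ (θ n)
    have h3 := hdiagΓ (β • θ n - restrΓ (μ n))
    have hτL : (0:ℝ) ≤ τ * L⁻¹ := by positivity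
    have := mul_nonneg hτL h3
    have := mul_nonneg hτ.le h1
    have := mul_nonneg hτ.le h2
    rw [hD]; dsimp only; linarith
  -- the per-step energy estimate
  have step : ∀ n : ℕ, 1 ≤ n → n ≤ N → E (U n) + D n ≤ E (U (n - 1)) := by
    intro n h1 h2
    set a := U n with ha
    set b := U (n - 1) with hb
    set q : Fin nΓ → ℝ := β • θ n - restrΓ (μ n) with hq
    -- equation (i) tested with μ n
    have e1 := congrArg (fun v => v ⬝ᵥ μ n) (hbulk n h1 h2)
    simp only [add_dotProduct, sub_dotProduct, smul_dotProduct,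
      zero_dotProduct, smul_eq_mul] at e1
    rw [dotProduct_comm ((Matrix.diagonal dΩ).mulVec (a - b)) (μ n),
      dot_mulVec_symm' hdΩsym (μ n) (a - b),
      dotProduct_comm (LΩ.mulVec (μ n)) (μ n),
      extΩ_dot, dotProduct_comm ((Matrix.diagonal dΓ).mulVec q) (restrΓ (μ n))] at e1
    -- equation (ii) tested with θ n
    have e2 := congrArg (fun v => v ⬝ᵥ θ n) (hbdry n h1 h2)
    simp only [add_dotProduct, smul_dotProduct,
      zero_dotProduct, smul_eq_mul] at e2
    rw [dotProduct_comm ((Matrix.diagonal dΓ).mulVec (restrΓ a - restrΓ b)) (θ n),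
      dot_mulVec_symm' hdΓsym (θ n) (restrΓ a - restrΓ b),
      dotProduct_comm (LΓ.mulVec (θ n)) (θ n),
      dotProduct_comm ((Matrix.diagonal dΓ).mulVec q) (θ n)] at e2
    -- equation (iii) tested with a - b
    have e3 := congrArg (fun v => (a - b) ⬝ᵥ v) (hpot n h1 h2)
    simp only [← ha, ← hb] at e3
    simp only [dotProduct_add, dotProduct_smul, smul_eq_mul] at e3
    rw [dotProduct_comm (a - b) (extΩ ((Matrix.diagonal dΓ).mulVec (θ n))),
      extΩ_dot, restrΓ_sub,
      dotProduct_comm ((Matrix.diagonal dΓ).mulVec (θ n)) (restrΓ a - restrΓ b),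
      dotProduct_comm (a - b) (extΩ (LΓ.mulVec (restrΓ a))),
      extΩ_dot, restrΓ_sub,
      dotProduct_comm (LΓ.mulVec (restrΓ a)) (restrΓ a - restrΓ b),
      dotProduct_comm (a - b)
        (extΩ ((Matrix.diagonal dΓ).mulVec (fun i => deriv G₁ (restrΓ a i) + deriv G₂ (restrΓ b i)))),
      extΩ_dot, restrΓ_sub,
      dotProduct_comm ((Matrix.diagonal dΓ).mulVec (fun i => deriv G₁ (restrΓ a i) + deriv G₂ (restrΓ b i)))
        (restrΓ a - restrΓ b)] at e3
    -- expansion of the boundary quadratic term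
    have hqq : q ⬝ᵥ (Matrix.diagonal dΓ).mulVec q
        = β * (θ n ⬝ᵥ (Matrix.diagonal dΓ).mulVec q)
          - restrΓ (μ n) ⬝ᵥ (Matrix.diagonal dΓ).mulVec q := by
      rw [hq]
      simp [sub_dotProduct, smul_dotProduct]
    -- key identity combining (i) and (ii)
    have key : (a - b) ⬝ᵥ (Matrix.diagonal dΩ).mulVec (μ n)
        + (restrΓ a - restrΓ b) ⬝ᵥ (Matrix.diagonal dΓ).mulVec (θ n)
        = -(τ * (μ n ⬝ᵥ LΩ.mulVec (μ n)) + τ * (θ n ⬝ᵥ LΓ.mulVec (θ n))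
            + τ * L⁻¹ * (q ⬝ᵥ (Matrix.diagonal dΓ).mulVec q)) := by
      linear_combination e1 + e2 + (τ * L⁻¹) * hqq
    -- convexity estimates for the potential parts
    have hF : ((fun _ => (1:ℝ)) ⬝ᵥ (Matrix.diagonal dΩ).mulVec (fun i => F₁ (a i) + F₂ (a i)))
        - ((fun _ => (1:ℝ)) ⬝ᵥ (Matrix.diagonal dΩ).mulVec (fun i => F₁ (b i) + F₂ (b i)))
        ≤ (a - b) ⬝ᵥ (Matrix.diagonal dΩ).mulVec (fun i => deriv F₁ (a i) + deriv F₂ (b i)) := by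
      simp only [dotProduct, Matrix.mulVec_diagonal, one_mul, Pi.sub_apply]
      rw [← Finset.sum_sub_distrib]
      refine Finset.sum_le_sum fun i _ => ?_
      have hc1 := convex_deriv_ineq' hF₁c hF₁d (a i) (b i)
      have hc2 := concave_deriv_ineq' hF₂c hF₂d (a i) (b i)
      nlinarith [mul_le_mul_of_nonneg_left (add_le_add hc1 hc2) (hdΩ i).le]
    have hG : ((fun _ => (1:ℝ)) ⬝ᵥ (Matrix.diagonal dΓ).mulVec (fun i => G₁ (restrΓ a i) + G₂ (restrΓ a i)))
        - ((fun _ => (1:ℝ)) ⬝ᵥ (Matrix.diagonal dΓ).mulVec (fun i => G₁ (restrΓ b i) + G₂ (restrΓ b i)))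
        ≤ (restrΓ a - restrΓ b) ⬝ᵥ
            (Matrix.diagonal dΓ).mulVec (fun i => deriv G₁ (restrΓ a i) + deriv G₂ (restrΓ b i)) := by
      simp only [dotProduct, Matrix.mulVec_diagonal, one_mul, Pi.sub_apply]
      rw [← Finset.sum_sub_distrib]
      refine Finset.sum_le_sum fun i _ => ?_
      have hc1 := convex_deriv_ineq' hG₁c hG₁d (restrΓ a i) (restrΓ b i)
      have hc2 := concave_deriv_ineq' hG₂c hG₂d (restrΓ a i) (restrΓ b i)
      nlinarith [mul_le_mul_of_nonneg_left (add_le_add hc1 hc2) (hdΓ i).le]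
    -- quadratic estimates
    have hq1 := quad_step' hLΩ a b
    have hq2 := mul_le_mul_of_nonneg_left (quad_step' hLΓ (restrΓ a) (restrΓ b)) hκ
    -- put everything together
    rw [hE, hD]
    unfold discreteEnergy
    dsimp only
    simp only [← hq]
    linarith [key, e3, hF, hG, hq1, hq2]
  -- global telescoping estimate
  have main : ∀ k : ℕ, k ≤ N → E (U k) + ∑ n ∈ Finset.Icc 1 k, D n ≤ E (U 0) := by
    intro k
    induction k with
    | zero => intro _; simp
    | succ k ih =>
      intro hk
      have hk' : k ≤ N := Nat.le_of_succ_le hk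
      have hstep := step (k + 1) (Nat.succ_le_succ (Nat.zero_le k)) hk
      simp only [Nat.add_sub_cancel] at hstep
      rw [Finset.sum_Icc_succ_top (Nat.succ_le_succ (Nat.zero_le k))]
      linarith [ih hk']
  refine ⟨fun k _ hk => main k hk, fun k hk => ?_, ?_⟩
  · have h := main k hk
    have hs : 0 ≤ ∑ n ∈ Finset.Icc 1 k, D n :=
      Finset.sum_nonneg fun n _ => hDnonneg n
    linarith
  · have h := main N le_rfl
    have hEN := hEnonneg (U N)
    have hsum : ∑ n ∈ Finset.Icc 1 N,
        (τ * L⁻¹ * ((β • θ n - restrΓ (μ n)) ⬝ᵥ (Matrix.diagonal dΓ).mulVec (β • θ n - restrΓ (μ n))))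
        ≤ ∑ n ∈ Finset.Icc 1 N, D n := by
      refine Finset.sum_le_sum fun n _ => ?_
      have h1 := psd_quad_nonneg' hLΩ (μ n)
      have h2 := psd_quad_nonneg' hLΓ (θ n)
      rw [hD]; dsimp only
      nlinarith [mul_nonneg hτ.le h1, mul_nonneg hτ.le h2]
    rw [← Finset.mul_sum] at hsum
    set S := ∑ n ∈ Finset.Icc 1 N,
        (β • θ n - restrΓ (μ n)) ⬝ᵥ (Matrix.diagonal dΓ).mulVec (β • θ n - restrΓ (μ n)) with hS
    have hfin : τ * L⁻¹ * S ≤ E (U 0) := by linarith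
    have hLinv : L * (τ * L⁻¹ * S) = τ * S := by
      field_simp
    linarith [mul_le_mul_of_nonneg_left hfin hL.le, hLinv]
end
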